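/- Let q ≥ 1 be an integer, let p₁,…,p_{q+1} > 0 satisfy Σ_{j=1}^{q+1} p_j = 1, let E₀ ∈ ℝ, let w ∈ ℂ with Im w ≠ 0, and let ζ(1),…,ζ(q+1) be nonzero complex numbers satisfying E₀ = Σ_{j=1}^{q+1} p_j ζ(j) + 2w and p_j(ζ(j)^{−1} − ζ(j)) = 2w for every j. If the quotient ζ(j)/conj(ζ(j)) takes the same value u for all j ∈ {1,…,q+1}, then either p₁ = p₂ = … = p_{q+1}, or E₀ = 0 and u = −1. -/

import Mathlib

open Finset

/-- A complex number whose square is a positive real is real. -/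
lemma im_eq_zero_of_sq_pos_real (z : ℂ) (r : ℝ) (hr : 0 < r) (h : z * z = (r : ℂ)) :
    z.im = 0 := by
  have hre : z.re * z.re - z.im * z.im = r := by
    have := congrArg Complex.re h
    simpa [Complex.mul_re] using this
  have him : z.re * z.im + z.im * z.re = 0 := by
    have := congrArg Complex.im h
    simpa [Complex.mul_im] using this
  by_contra hzim
  have hzre : z.re = 0 := by
    rcases mul_eq_zero.mp (by linarith : z.re * z.im = 0) with h' | h'
    · exact h'
    · exact absurd h' hzim
  nlinarith [sq_nonneg z.im]

/-- Lemma 12 of the paper: if the phases `ζ(j)/conj(ζ(j))` of the Green-function entries of the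
anisotropic operator `A_p` on the `(q+1)`-regular tree at spectral parameter `E₀ + i0` all
coincide, then either the walk is isotropic (all `p_j` equal), or `E₀ = 0` and the common
phase is `-1`. -/
theorem anisotropic_phase_dichotomy
    (q : ℕ) (hq : 1 ≤ q)
    (p : Fin (q + 1) → ℝ) (hp : ∀ j, 0 < p j) (hpsum : ∑ j, p j = 1)
    (E₀ : ℝ) (w : ℂ) (hw : w.im ≠ 0)
    (ζ : Fin (q + 1) → ℂ) (hζ : ∀ j, ζ j ≠ 0)
    (h1 : (E₀ : ℂ) = (∑ j, (p j : ℂ) * ζ j) + 2 * w)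
    (h2 : ∀ j, (p j : ℂ) * ((ζ j)⁻¹ - ζ j) = 2 * w)
    (u : ℂ) (hu : ∀ j, ζ j / (starRingEnd ℂ) (ζ j) = u) :
    (∀ i j, p i = p j) ∨ (E₀ = 0 ∧ u = -1) := by
  classical
  have hz0 : ζ 0 ≠ 0 := hζ 0
  have hn : (0 : ℝ) < ‖ζ 0‖ := by
    simpa using (norm_pos_iff.mpr hz0)
  set v : ℂ := ζ 0 / (‖ζ 0‖ : ℂ) with hvdef
  have hvabs : ‖v‖ = 1 := by
    rw [hvdef, norm_div, Complex.norm_real, Real.norm_eq_abs, abs_of_pos hn, div_self hn.ne']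
  have hv0 : v ≠ 0 := by
    intro h; rw [h] at hvabs; simp at hvabs
  have hvinv : v⁻¹ = (starRingEnd ℂ) v := Complex.inv_eq_conj hvabs
  have habs : ((‖ζ 0‖ : ℂ)) * ((‖ζ 0‖ : ℂ))
      = ζ 0 * (starRingEnd ℂ) (ζ 0) := by
    rw [← Complex.ofReal_mul, ← sq, Complex.sq_norm, Complex.mul_conj]
  have hc0 : (starRingEnd ℂ) (ζ 0) ≠ 0 := by simpa using hz0
  have hN0 : ((‖ζ 0‖ : ℂ)) ≠ 0 := by
    exact_mod_cast hn.ne'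
  have huv : u = v * v := by
    rw [← hu 0, hvdef]
    field_simp
    rw [sq, habs]
  -- each ζ j is a real multiple of v
  have hτim : ∀ j, (ζ j / v).im = 0 := by
    intro j
    have hcj : (starRingEnd ℂ) (ζ j) ≠ 0 := by simpa using hζ j
    have hnj : (0 : ℝ) < Complex.normSq (ζ j) := Complex.normSq_pos.mpr (hζ j)
    apply im_eq_zero_of_sq_pos_real _ _ hnj
    have hsq : ζ j * ζ j = u * (ζ j * (starRingEnd ℂ) (ζ j)) := by
      rw [← hu j]; field_simp
    rw [div_mul_div_comm, hsq, huv, Complex.mul_conj]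
    field_simp
  set τ : Fin (q + 1) → ℝ := fun j => (ζ j / v).re with hτdef
  have hrw : ∀ j, ζ j = (τ j : ℂ) * v := by
    intro j
    have h' : (ζ j / v) = ((τ j : ℝ) : ℂ) :=
      Complex.ext (by simp [hτdef]) (by simpa using hτim j)
    calc ζ j = (ζ j / v) * v := by field_simp
      _ = (τ j : ℂ) * v := by rw [h']
  have hτ0 : ∀ j, τ j ≠ 0 := by
    intro j h
    apply hζ j
    rw [hrw j, h]; simp
  set a : ℝ := v.re with hadef
  set b : ℝ := v.im with hbdef
  have hab : a * a + b * b = 1 := by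
    have h' : Complex.normSq v = 1 := by rw [← Complex.sq_norm, hvabs]; norm_num
    rw [Complex.normSq_apply] at h'
    exact h'
  -- rewrite h2 j into real and imaginary parts
  have h2' : ∀ j, (p j : ℂ) * ((((τ j)⁻¹ : ℝ) : ℂ) * (starRingEnd ℂ) v - ((τ j : ℝ) : ℂ) * v)
      = 2 * w := by
    intro j
    rw [← h2 j, hrw j]
    rw [mul_inv, hvinv.symm]
    push_cast
    ring
  have h2im : ∀ j, p j * ((τ j)⁻¹ * (-b) - τ j * b) = 2 * w.im := by
    intro j
    have := congrArg Complex.im (h2' j)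
    simpa [Complex.mul_im, Complex.sub_im, Complex.sub_re, Complex.mul_re] using this
  have h2re : ∀ j, p j * ((τ j)⁻¹ * a - τ j * a) = 2 * w.re := by
    intro j
    have := congrArg Complex.re (h2' j)
    simpa [Complex.mul_re, Complex.sub_re, Complex.sub_im, Complex.mul_im] using this
  -- rewrite h1
  have hsum : (∑ j, (p j : ℂ) * ζ j) = ((∑ j, p j * τ j : ℝ) : ℂ) * v := by
    push_cast
    rw [Finset.sum_mul]
    exact Finset.sum_congr rfl (fun j _ => by rw [hrw j]; ring)
  set S : ℝ := ∑ j, p j * τ j with hSdef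
  have h1' : (E₀ : ℂ) = ((S : ℝ) : ℂ) * v + 2 * w := by rw [h1, hsum]
  have h1im : 0 = S * b + 2 * w.im := by
    have := congrArg Complex.im h1'
    simpa [Complex.add_im, Complex.mul_im] using this
  have h1re : E₀ = S * a + 2 * w.re := by
    have := congrArg Complex.re h1'
    simpa [Complex.add_re, Complex.mul_re] using this
  have hb0 : b ≠ 0 := by
    intro hb
    have := h2im 0
    rw [hb] at this
    simp at this
    exact hw (by linarith)
  by_cases ha : a = 0
  · -- E₀ = 0 and u = -1
    right
    have hwre : w.re = 0 := by
      have := h2re 0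
      rw [ha] at this
      simp at this
      linarith
    constructor
    · rw [h1re, ha, hwre]; ring
    · have hb2 : b ^ 2 = 1 := by rw [ha] at hab; linarith
      rw [huv]
      apply Complex.ext
      · simp [Complex.mul_re, ← hadef, ← hbdef, ha]
        nlinarith
      · simp [Complex.mul_im, ← hadef, ← hbdef, ha]
  · -- all p j equal
    left
    intro i j
    have hi1 := h2im i
    have hj1 := h2im j
    have hi2 := h2re i
    have hj2 := h2re j
    -- p i * (τ i ⁻¹ + τ i) = p j * (τ j ⁻¹ + τ j)
    have e1 : p i * ((τ i)⁻¹ + τ i) = p j * ((τ j)⁻¹ + τ j) := by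
      have h' : p i * ((τ i)⁻¹ + τ i) * b = p j * ((τ j)⁻¹ + τ j) * b := by
        linear_combination hj1 - hi1
      exact mul_right_cancel₀ hb0 h'
    have e2 : p i * ((τ i)⁻¹ - τ i) = p j * ((τ j)⁻¹ - τ j) := by
      have h' : p i * ((τ i)⁻¹ - τ i) * a = p j * ((τ j)⁻¹ - τ j) * a := by
        linear_combination hi2 - hj2
      exact mul_right_cancel₀ ha h'
    have hti : (τ i)⁻¹ * τ i = 1 := inv_mul_cancel₀ (hτ0 i)
    have htj : (τ j)⁻¹ * τ j = 1 := inv_mul_cancel₀ (hτ0 j)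
    have hsq : p i ^ 2 = p j ^ 2 := by
      linear_combination ((p i * ((τ i)⁻¹ + τ i) + p j * ((τ j)⁻¹ + τ j)) / 4) * e1
        - ((p i * ((τ i)⁻¹ - τ i) + p j * ((τ j)⁻¹ - τ j)) / 4) * e2
        - p i ^ 2 * hti + p j ^ 2 * htj
    have hfact : (p i - p j) * (p i + p j) = 0 := by linear_combination hsq
    rcases mul_eq_zero.mp hfact with h' | h'
    · linarith
    · exfalso; have := hp i; have := hp j; linarith
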